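/- Let $(K,v)$ be a valued field with dense value group $\Gamma$ (for every $\alpha < \beta$ in $\Gamma$ there is $\gamma$ with $\alpha < \gamma < \beta$). Let $X = b \setminus \bigcup_{i=1}^s b_i$ be a Swiss cheese (a ball minus finitely many balls). If $X$ intersects infinitely many distinct closed balls of radius $0$, then $X$ contains a closed ball of strictly negative radius. -/

import Mathlib

/-- The open ball `B_{>γ}(a) = {x : v(x-a) > γ}` in a valued field. -/
def oball {K : Type*} [Field K] {Γ : Type*} [AddCommGroup Γ] [LinearOrder Γ] [IsOrderedAddMonoid Γ]
    (v : AddValuation K (WithTop Γ)) (γ : Γ) (a : K) : Set K :=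
  {x | (γ : WithTop Γ) < v (x - a)}

/-- The closed ball `B_{≥γ}(a) = {x : v(x-a) ≥ γ}` in a valued field. -/
def cball {K : Type*} [Field K] {Γ : Type*} [AddCommGroup Γ] [LinearOrder Γ] [IsOrderedAddMonoid Γ]
    (v : AddValuation K (WithTop Γ)) (γ : Γ) (a : K) : Set K :=
  {x | (γ : WithTop Γ) ≤ v (x - a)}

/-- A ball is an open or a closed ball. -/
def IsBall {K : Type*} [Field K] {Γ : Type*} [AddCommGroup Γ] [LinearOrder Γ] [IsOrderedAddMonoid Γ]
    (v : AddValuation K (WithTop Γ)) (B : Set K) : Prop :=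
  ∃ γ a, B = oball v γ a ∨ B = cball v γ a

/-- Two points at distance ≥ 0 give the same closed ball of radius 0. -/
lemma cball_zero_eq {K : Type*} [Field K] {Γ : Type*} [AddCommGroup Γ] [LinearOrder Γ] [IsOrderedAddMonoid Γ]
    (v : AddValuation K (WithTop Γ)) {c c' : K}
    (h : ((0 : Γ) : WithTop Γ) ≤ v (c - c')) :
    cball v 0 c' = cball v 0 c := by
  ext y
  simp only [cball, Set.mem_setOf_eq]
  constructor
  · intro hy
    have h2 : ((0 : Γ) : WithTop Γ) ≤ v ((y - c') - (c - c')) := v.map_le_sub hy h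
    rwa [sub_sub_sub_cancel_right] at h2
  · intro hy
    have h2 : ((0 : Γ) : WithTop Γ) ≤ v ((y - c) + (c - c')) := v.map_le_add hy h
    rwa [sub_add_sub_cancel] at h2

/-- In a valued field with dense value group, if a Swiss cheese
`X = b \ ⋃ i, b i` intersects infinitely many distinct closed balls of radius
`0`, then `X` contains a closed ball of strictly negative radius. -/
theorem swiss_cheese_contains_negative_ball {K : Type*} [Field K] {Γ : Type*}
    [AddCommGroup Γ] [LinearOrder Γ] [IsOrderedAddMonoid Γ] (v : AddValuation K (WithTop Γ))
    (hdense : ∀ α β : Γ, α < β → ∃ γ : Γ, α < γ ∧ γ < β)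
    (s : ℕ) (b : Set K) (hb : IsBall v b) (bi : Fin s → Set K)
    (hbi : ∀ i, IsBall v (bi i)) (X : Set K) (hX : X = b \ ⋃ i, bi i)
    (hinf : {S : Set K | (∃ c : K, S = cball v 0 c) ∧ (S ∩ X).Nonempty}.Infinite) :
    ∃ γ : Γ, γ < 0 ∧ ∃ a : K, cball v γ a ⊆ X := by
  choose ρ e hbe using hbi
  set Bad : Set (Set K) := Set.range (fun i : Fin s => cball v 0 (e i)) with hBad
  have hBadfin : Bad.Finite := Set.finite_range _
  obtain ⟨S1, hS1, S2, hS2, hSne⟩ := (hinf.diff hBadfin).nontrivial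
  obtain ⟨⟨⟨c1', hS1e⟩, x1, hx1S, hx1X⟩, hS1b⟩ := hS1
  obtain ⟨⟨⟨c2', hS2e⟩, x2, hx2S, hx2X⟩, hS2b⟩ := hS2
  -- recenter the cosets at their witnesses
  have hS1c : S1 = cball v 0 x1 := by
    rw [hS1e]; exact cball_zero_eq v (by rw [hS1e] at hx1S; exact hx1S)
  have hS2c : S2 = cball v 0 x2 := by
    rw [hS2e]; exact cball_zero_eq v (by rw [hS2e] at hx2S; exact hx2S)
  set c := x1
  -- distance between the two cosets is negative
  have hδ0 : v (c - x2) < ((0 : Γ) : WithTop Γ) := by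
    by_contra h
    push_neg at h
    exact hSne (by rw [hS1c, hS2c, cball_zero_eq v h])
  have hδne : v (c - x2) ≠ ⊤ := hδ0.ne_top
  obtain ⟨δ, hδeq⟩ := WithTop.ne_top_iff_exists.mp hδne
  -- distances to the centers of the removed balls are negative
  have hdi : ∀ i : Fin s, v (e i - c) < ((0 : Γ) : WithTop Γ) := by
    intro i
    by_contra h
    push_neg at h
    refine hS1b ⟨i, ?_⟩
    show cball v 0 (e i) = S1
    rw [← cball_zero_eq v h, ← hS1c]
  -- build the finite max
  set T : Finset (WithTop Γ) :=
    insert (↑δ) (Finset.image (fun i => v (e i - c)) Finset.univ) with hT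
  have hTne : T.Nonempty := ⟨↑δ, Finset.mem_insert_self _ _⟩
  have hmlt : T.max' hTne < ((0 : Γ) : WithTop Γ) := by
    rw [Finset.max'_lt_iff]
    intro y hy
    rw [hT, Finset.mem_insert] at hy
    rcases hy with rfl | hy
    · rw [hδeq]; exact hδ0
    · obtain ⟨i, _, rfl⟩ := Finset.mem_image.mp hy
      exact hdi i
  have hmne : T.max' hTne ≠ ⊤ := hmlt.ne_top
  obtain ⟨m, hmeq⟩ := WithTop.ne_top_iff_exists.mp hmne
  have hm0 : m < 0 := by
    have := hmlt; rw [← hmeq] at this; exact_mod_cast this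
  obtain ⟨γ, hmγ, hγ0⟩ := hdense m 0 hm0
  refine ⟨γ, hγ0, c, ?_⟩
  -- key inequalities
  have hδle : ((δ : Γ) : WithTop Γ) ≤ ((γ : Γ) : WithTop Γ) := by
    have h1 : (↑δ : WithTop Γ) ≤ T.max' hTne :=
      Finset.le_max' T _ (by rw [hT]; exact Finset.mem_insert_self _ _)
    rw [← hmeq] at h1
    exact le_trans h1 (by exact_mod_cast hmγ.le)
  have hdile : ∀ i : Fin s, v (e i - c) < ((γ : Γ) : WithTop Γ) := by
    intro i
    have h1 : v (e i - c) ≤ T.max' hTne := Finset.le_max' T _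
      (by rw [hT]
          exact Finset.mem_insert_of_mem (Finset.mem_image.mpr ⟨i, Finset.mem_univ i, rfl⟩))
    rw [← hmeq] at h1
    exact lt_of_le_of_lt h1 (by exact_mod_cast hmγ)
  -- membership facts
  have hcX : c ∈ X := hx1X
  have hc2X : x2 ∈ X := hx2X
  rw [hX] at hcX hc2X
  intro x hx
  have hxc : ((γ : Γ) : WithTop Γ) ≤ v (x - c) := hx
  rw [hX]
  constructor
  · -- x ∈ b
    obtain ⟨β, a, hb'⟩ := hb
    rcases hb' with rfl | rfl
    · -- open ball
      have hca : (↑β : WithTop Γ) < v (c - a) := hcX.1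
      have hc2a : (↑β : WithTop Γ) < v (x2 - a) := hc2X.1
      have hβδ : (↑β : WithTop Γ) < ↑δ := by
        rw [hδeq]
        have : c - x2 = (c - a) - (x2 - a) := by ring
        rw [this]
        calc (↑β : WithTop Γ) < min (v (c - a)) (v (x2 - a)) := lt_min hca hc2a
          _ ≤ v ((c - a) - (x2 - a)) := v.map_sub _ _
      have hxca : (↑β : WithTop Γ) < v (x - c) :=
        lt_of_lt_of_le (lt_of_lt_of_le hβδ hδle) hxc
      show (↑β : WithTop Γ) < v (x - a)
      have : x - a = (x - c) + (c - a) := by ring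
      rw [this]
      exact v.map_lt_add hxca hca
    · -- closed ball
      have hca : (↑β : WithTop Γ) ≤ v (c - a) := hcX.1
      have hc2a : (↑β : WithTop Γ) ≤ v (x2 - a) := hc2X.1
      have hβδ : (↑β : WithTop Γ) ≤ ↑δ := by
        rw [hδeq]
        have : c - x2 = (c - a) - (x2 - a) := by ring
        rw [this]
        exact v.map_le_sub hca hc2a
      have hxca : (↑β : WithTop Γ) ≤ v (x - c) :=
        le_trans (le_trans hβδ hδle) hxc
      show (↑β : WithTop Γ) ≤ v (x - a)
      have : x - a = (x - c) + (c - a) := by ring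
      rw [this]
      exact v.map_le_add hxca hca
  · -- x ∉ ⋃ bi
    intro hxU
    obtain ⟨_, ⟨i, rfl⟩, hxi'⟩ := hxU
    have hxi : x ∈ bi i := hxi'
    have hcne : c ∉ bi i := fun h => hcX.2 (Set.mem_iUnion.mpr ⟨i, h⟩)
    -- compute v (x - c) = v (e i - c)
    have hkey : v (x - c) = v (e i - c) := by
      rcases hbe i with hcase | hcase
      · rw [hcase] at hxi hcne
        have hx' : (↑(ρ i) : WithTop Γ) < v (x - e i) := hxi
        have hc' : v (c - e i) ≤ (↑(ρ i) : WithTop Γ) := not_lt.mp hcne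
        have hlt : v (c - e i) < v (x - e i) := lt_of_le_of_lt hc' hx'
        have : x - c = (x - e i) - (c - e i) := by ring
        rw [this, v.map_sub_eq_of_lt_right hlt, v.map_sub_swap]
      · rw [hcase] at hxi hcne
        have hx' : (↑(ρ i) : WithTop Γ) ≤ v (x - e i) := hxi
        have hc' : v (c - e i) < (↑(ρ i) : WithTop Γ) := not_le.mp hcne
        have hlt : v (c - e i) < v (x - e i) := lt_of_lt_of_le hc' hx'
        have : x - c = (x - e i) - (c - e i) := by ring
        rw [this, v.map_sub_eq_of_lt_right hlt, v.map_sub_swap]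
    have := lt_of_lt_of_le (hdile i) hxc
    rw [hkey] at this
    exact lt_irrefl _ this
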